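/- Assume the standing assumptions. For every λ ∈ ℂ with λ ∉ {0, a, −a, b, −b}, the dimension (Module.rank over ℂ) of ker(U − λ·I) equals the dimension of ker(T − φ_{a,b}(λ)·I). In particular, λ is an eigenvalue of U if and only if φ_{a,b}(λ) is an eigenvalue of T. -/

import Mathlib

open ContinuousLinearMap

set_option maxHeartbeats 1000000

/-- Under the standing assumptions, for every `λ ∉ {0, a, −a, b, −b}`,
`dim ker(U − λ) = dim ker(T − φ_{a,b}(λ))`; in particular `λ` is an eigenvalue of
`U` iff `φ_{a,b}(λ)` is an eigenvalue of `T`. -/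
theorem stmt_14 {H : Type u_1} {K : Type u_2}
    [NormedAddCommGroup H] [InnerProductSpace ℂ H] [CompleteSpace H] [Nontrivial H]
    [NormedAddCommGroup K] [InnerProductSpace ℂ K] [CompleteSpace K] [Nontrivial K]
    (a b : ℝ)
    (d : H →L[ℂ] K) (hd : d ∘L (adjoint d) = 1)
    (S : H →L[ℂ] H) (hS : IsSelfAdjoint S) (hS2 : S ∘L S = 1)
    (C : H →L[ℂ] H)
    (hC : C = (a : ℂ) • ((adjoint d) ∘L d) + (b : ℂ) • (1 - (adjoint d) ∘L d))
    (U : H →L[ℂ] H) (hU : U = S ∘L C)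
    (T : K →L[ℂ] K) (hT : T = d ∘L S ∘L (adjoint d))
    (h1 : (adjoint d) ∘L d ≠ 1) (h2 : S ≠ 1) (h3 : S ≠ -1)
    (h4 : a ≠ b) (h5 : a ≠ -b) (h6 : a * b ≠ 0) :
    ∀ lam : ℂ, lam ∉ ({0, (a : ℂ), -(a : ℂ), (b : ℂ), -(b : ℂ)} : Set ℂ) →
      Cardinal.lift.{u_2}
          (Module.rank ℂ (LinearMap.ker ((U - lam • (1 : H →L[ℂ] H) : H →L[ℂ] H) : H →ₗ[ℂ] H))) =
        Cardinal.lift.{u_1} (Module.rank ℂ (LinearMap.ker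
          ((T - ((lam - (a * b : ℝ) * lam⁻¹) / ((a : ℂ) - (b : ℝ))) • (1 : K →L[ℂ] K) : K →L[ℂ] K) : K →ₗ[ℂ] K))) ∧
      ((∃ ψ : H, ψ ≠ 0 ∧ U ψ = lam • ψ) ↔
        (∃ g : K, g ≠ 0 ∧ T g = ((lam - (a * b : ℝ) * lam⁻¹) / ((a : ℂ) - (b : ℝ))) • g)) := by
  intro lam hlam
  simp only [Set.mem_insert_iff, Set.mem_singleton_iff, not_or] at hlam
  obtain ⟨hl0, hla, hla', hlb, hlb'⟩ := hlam
  have ha0 : a ≠ 0 := fun h => h6 (by simp [h])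
  have hb0 : b ≠ 0 := fun h => h6 (by simp [h])
  have hbC : (b : ℂ) ≠ 0 := Complex.ofReal_ne_zero.mpr hb0
  have hab : (a : ℂ) - (b : ℂ) ≠ 0 := sub_ne_zero.mpr (by exact_mod_cast h4)
  set μ : ℂ := (lam - (a * b : ℝ) * lam⁻¹) / ((a : ℂ) - (b : ℝ)) with hμdef
  have hμ1 : lam * (((a : ℂ) - b) * μ) = lam ^ 2 - (a : ℂ) * b := by
    rw [hμdef]; push_cast; field_simp
  have hlb2 : lam ^ 2 - (b : ℂ) ^ 2 ≠ 0 := by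
    have : lam ^ 2 - (b : ℂ) ^ 2 = (lam - b) * (lam + b) := by ring
    rw [this]
    exact mul_ne_zero (sub_ne_zero.mpr hlb)
      (fun h' => hlb' (eq_neg_of_add_eq_zero_left h'))
  set c : ℂ := (lam ^ 2 - (b : ℂ) ^ 2) / ((a : ℂ) - b) with hcdef
  have hcne : c ≠ 0 := div_ne_zero hlb2 hab
  have hc2 : (b : ℂ) + lam * μ = c := by
    rw [hμdef, hcdef]; field_simp; push_cast; ring
  have hdd' : ∀ x : K, d ((adjoint d) x) = x := fun x => by
    have := congrArg (fun f : K →L[ℂ] K => f x) hd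
    simpa using this
  have hSS' : ∀ x : H, S (S x) = x := fun x => by
    have := congrArg (fun f : H →L[ℂ] H => f x) hS2
    simpa using this
  have hTpt : ∀ x : K, T x = d (S ((adjoint d) x)) := fun x => by rw [hT]; simp
  have hCpt : ∀ x : H, C x = (b : ℂ) • x + ((a : ℂ) - b) • (adjoint d) (d x) := fun x => by
    rw [hC]
    simp only [add_apply, smul_apply, comp_apply, sub_apply, one_apply, coe_sub', coe_smul', coe_add',
      coe_comp', Pi.add_apply, Pi.sub_apply, Pi.smul_apply, Function.comp_apply,
      ContinuousLinearMap.one_apply, id_eq]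
    module
  have hCeq : ∀ ψ : H, U ψ = lam • ψ → C ψ = lam • S ψ := by
    intro ψ hψ
    rw [hU, comp_apply] at hψ
    calc C ψ = S (S (C ψ)) := (hSS' _).symm
      _ = lam • S ψ := by rw [hψ, map_smul]
  have hPeq : ∀ ψ : H, U ψ = lam • ψ →
      ((a : ℂ) - b) • (adjoint d) (d ψ) = lam • S ψ - (b : ℂ) • ψ := by
    intro ψ hψ
    have h := hCeq ψ hψ
    rw [hCpt] at h
    exact eq_sub_of_add_eq' h
  have hdSeq : ∀ ψ : H, U ψ = lam • ψ → lam • d (S ψ) = (a : ℂ) • d ψ := by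
    intro ψ hψ
    have h := congrArg d (hPeq ψ hψ)
    simp only [map_smul, map_sub] at h
    rw [hdd'] at h
    linear_combination (norm := module) -h
  have fwd : ∀ ψ : H, U ψ = lam • ψ → T (d ψ) = μ • d ψ := by
    intro ψ hψ
    have h := congrArg (fun x => d (S x)) (hPeq ψ hψ)
    simp only [map_smul, map_sub] at h
    rw [hSS', ← hTpt] at h
    have hc : lam * ((a : ℂ) - b) ≠ 0 := mul_ne_zero hl0 hab
    apply smul_right_injective K hc
    show (lam * ((a : ℂ) - b)) • T (d ψ) = (lam * ((a : ℂ) - b)) • μ • d ψ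
    rw [smul_smul, mul_assoc, hμ1]
    linear_combination (norm := module) lam • h - (b : ℂ) • hdSeq ψ hψ
  have inj0 : ∀ ψ : H, U ψ = lam • ψ → d ψ = 0 → ψ = 0 := by
    intro ψ hψ hdψ
    have hP := hPeq ψ hψ
    rw [hdψ] at hP
    simp only [map_zero, smul_zero] at hP
    have h1' : lam • S ψ = (b : ℂ) • ψ := by
      linear_combination (norm := module) -hP
    have h2' : lam • ψ = (b : ℂ) • S ψ := by
      have := congrArg S h1'
      rw [map_smul, map_smul, hSS'] at this
      exact this
    have h3' : (lam ^ 2 - (b : ℂ) ^ 2) • ψ = 0 := by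
      have ha' := congrArg (lam • ·) h2'
      simp only [smul_smul] at ha'
      have hb' := congrArg ((b : ℂ) • ·) h1'
      simp only [smul_smul] at hb'
      linear_combination (norm := module) ha' + hb'
    rcases smul_eq_zero.mp h3' with h | h
    · exact absurd h hlb2
    · exact h
  have bwd : ∀ g : K, T g = μ • g →
      U ((b : ℂ) • (adjoint d) g + lam • S ((adjoint d) g)) =
        lam • ((b : ℂ) • (adjoint d) g + lam • S ((adjoint d) g)) ∧
      d ((b : ℂ) • (adjoint d) g + lam • S ((adjoint d) g)) = c • g := by
    intro g hg
    have hCd : C ((adjoint d) g) = (a : ℂ) • (adjoint d) g := by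
      rw [hCpt, hdd']
      module
    have hdSd : d (S ((adjoint d) g)) = μ • g := by rw [← hTpt]; exact hg
    have hCSd : C (S ((adjoint d) g)) =
        (b : ℂ) • S ((adjoint d) g) + (((a : ℂ) - b) * μ) • (adjoint d) g := by
      rw [hCpt, hdSd, map_smul, smul_smul]
    constructor
    · rw [hU, comp_apply]
      simp only [map_add, map_smul, hCd, hCSd, hSS']
      linear_combination (norm := module)
        congrArg (· • S ((adjoint d) g)) hμ1
    · rw [map_add, map_smul, map_smul, hdd', hdSd, smul_smul]
      linear_combination (norm := module) congrArg (· • g) hc2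
  have hmemU : ∀ x : H, x ∈ LinearMap.ker ((U - lam • (1 : H →L[ℂ] H) : H →L[ℂ] H) : H →ₗ[ℂ] H) ↔ U x = lam • x := by
    intro x
    simp only [LinearMap.mem_ker, ContinuousLinearMap.coe_coe, ContinuousLinearMap.coe_sub', ContinuousLinearMap.coe_smul',
      Pi.sub_apply, Pi.smul_apply, ContinuousLinearMap.one_apply, sub_eq_zero]
  have hmemT : ∀ y : K, y ∈ LinearMap.ker ((T - μ • (1 : K →L[ℂ] K) : K →L[ℂ] K) : K →ₗ[ℂ] K) ↔ T y = μ • y := by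
    intro y
    simp only [LinearMap.mem_ker, ContinuousLinearMap.coe_coe, ContinuousLinearMap.coe_sub', ContinuousLinearMap.coe_smul',
      Pi.sub_apply, Pi.smul_apply, ContinuousLinearMap.one_apply, sub_eq_zero]
  constructor
  · let F : LinearMap.ker ((U - lam • (1 : H →L[ℂ] H) : H →L[ℂ] H) : H →ₗ[ℂ] H) →ₗ[ℂ]
        LinearMap.ker ((T - μ • (1 : K →L[ℂ] K) : K →L[ℂ] K) : K →ₗ[ℂ] K) :=
      (d : H →ₗ[ℂ] K).restrict (fun x hx => (hmemT _).mpr (fwd x ((hmemU x).mp hx)))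
    have hFapp : ∀ x, (F x : K) = d (x : H) := fun x => rfl
    have hFinj : Function.Injective F := by
      intro x y hxy
      have hd' : d ((x : H) - (y : H)) = 0 := by
        have := congrArg (Subtype.val) hxy
        rw [hFapp, hFapp] at this
        rw [map_sub, this, sub_self]
      have hU' : U ((x : H) - (y : H)) = lam • ((x : H) - (y : H)) := by
        have hx := (hmemU _).mp x.2
        have hy := (hmemU _).mp y.2
        rw [map_sub, hx, hy, smul_sub]
      exact Subtype.ext (sub_eq_zero.mp (inj0 _ hU' hd'))
    have hFsurj : Function.Surjective F := by
      rintro ⟨g, hg⟩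
      have hg' := (hmemT g).mp hg
      obtain ⟨hUψ, hdψ⟩ := bwd g hg'
      refine ⟨⟨c⁻¹ • ((b : ℂ) • (adjoint d) g + lam • S ((adjoint d) g)), ?_⟩, ?_⟩
      · rw [hmemU, map_smul, hUψ, smul_comm]
      · apply Subtype.ext
        rw [hFapp]
        show d (c⁻¹ • _) = g
        rw [map_smul, hdψ, smul_smul, inv_mul_cancel₀ hcne, one_smul]
    exact (LinearEquiv.ofBijective F ⟨hFinj, hFsurj⟩).lift_rank_eq
  · constructor
    · rintro ⟨ψ, hψ0, hψ⟩
      exact ⟨d ψ, fun h => hψ0 (inj0 ψ hψ h), fwd ψ hψ⟩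
    · rintro ⟨g, hg0, hg⟩
      obtain ⟨hUψ, hdψ⟩ := bwd g hg
      refine ⟨_, ?_, hUψ⟩
      intro h
      rw [h, map_zero] at hdψ
      exact hg0 ((smul_eq_zero.mp hdψ.symm).resolve_left hcne)
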